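/- The function f : ℝ → ℝ defined by f(x) = x² + 3 sin²(x) satisfies f(x) ≥ 0 for all x with f(0) = 0 (so its infimum value is f* = 0), its derivative is f'(x) = 2x + 3 sin(2x), and f satisfies the Polyak–Łojasiewicz condition with parameter μ = 1/32 and value f* = 0: for all x ∈ ℝ, (2x + 3 sin(2x))² ≥ (1/16)(x² + 3 sin²(x)). Moreover, f is not convex. -/

import Mathlib

open Real

lemma sin_ge_neg_quarter (t : ℝ) (ht : 0 ≤ t) : -(t / 4) ≤ Real.sin t := by
  rcases le_or_gt t Real.pi with h | h
  · have := Real.sin_nonneg_of_nonneg_of_le_pi ht h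
    linarith
  rcases le_or_gt t 4 with h4 | h4
  · have hsub : Real.sin (t - Real.pi) = -Real.sin t := by
      rw [Real.sin_sub]; simp
    have h1 : Real.sin (t - Real.pi) ≤ t - Real.pi :=
      Real.sin_le (by linarith)
    have hpi : (3:ℝ) < Real.pi := Real.pi_gt_three
    have : -Real.sin t ≤ t - Real.pi := by rw [← hsub]; exact h1
    linarith
  · have := Real.neg_one_le_sin t
    linarith

lemma g_lower (x : ℝ) (hx : 0 ≤ x) : x / 2 ≤ 2 * x + 3 * Real.sin (2 * x) := by
  have := sin_ge_neg_quarter (2 * x) (by linarith)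
  linarith

lemma g_sq (x : ℝ) : (x / 2) ^ 2 ≤ (2 * x + 3 * Real.sin (2 * x)) ^ 2 := by
  rcases le_or_gt 0 x with hx | hx
  · have h := g_lower x hx
    have h0 : 0 ≤ x / 2 := by linarith
    exact pow_le_pow_left₀ h0 h 2
  · have h := g_lower (-x) (by linarith)
    have hs : Real.sin (2 * -x) = -Real.sin (2 * x) := by
      rw [show 2 * -x = -(2 * x) by ring, Real.sin_neg]
    rw [hs] at h
    have h0 : 0 ≤ -x / 2 := by linarith
    have := pow_le_pow_left₀ h0 h 2
    nlinarith

lemma sin_sq_le (x : ℝ) : Real.sin x ^ 2 ≤ x ^ 2 := by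
  rcases le_or_gt 0 x with hx | hx
  · have h1 : Real.sin x ≤ x := Real.sin_le hx
    have h2 : -x ≤ Real.sin x := by
      have := sin_ge_neg_quarter x hx; linarith
    nlinarith
  · have h1 : Real.sin (-x) ≤ -x := Real.sin_le (by linarith)
    have h2 : -(-x) ≤ Real.sin (-x) := by
      have := sin_ge_neg_quarter (-x) (by linarith); linarith
    rw [Real.sin_neg] at h1 h2
    nlinarith

theorem stmt_18 (f : ℝ → ℝ) (hf : f = fun x => x ^ 2 + 3 * Real.sin x ^ 2) :
    (∀ x, 0 ≤ f x) ∧ f 0 = 0 ∧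
    (∀ x, HasDerivAt f (2 * x + 3 * Real.sin (2 * x)) x) ∧
    (∀ x, (2 * x + 3 * Real.sin (2 * x)) ^ 2 ≥ (1 / 16) * (x ^ 2 + 3 * Real.sin x ^ 2)) ∧
    ¬ ConvexOn ℝ Set.univ f := by
  subst hf
  refine ⟨?_, ?_, ?_, ?_, ?_⟩
  · intro x; positivity
  · simp
  · intro x
    have h1 : HasDerivAt (fun x : ℝ => x ^ 2) (2 * x) x := by
      simpa using (hasDerivAt_pow 2 x)
    have h2 : HasDerivAt (fun x : ℝ => Real.sin x ^ 2)
        (2 * Real.sin x * Real.cos x) x := by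
      simpa [mul_comm] using ((Real.hasDerivAt_sin x).fun_pow 2)
    have := h1.fun_add ((h2.const_mul 3))
    have e : 2 * x + 3 * Real.sin (2 * x) = 2 * x + 3 * (2 * Real.sin x * Real.cos x) := by
      rw [Real.sin_two_mul]
    rw [e]; exact this
  · intro x
    have h1 := g_sq x
    have h2 := sin_sq_le x
    nlinarith
  · intro h
    have hmem : ∀ y : ℝ, y ∈ (Set.univ : Set ℝ) := fun y => Set.mem_univ y
    have := h.2 (hmem 0) (hmem Real.pi) (by norm_num : (0:ℝ) ≤ 1/2)
      (by norm_num : (0:ℝ) ≤ 1/2) (by norm_num)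
    simp only [smul_eq_mul] at this
    have hval : (1/2 : ℝ) * 0 + (1/2 : ℝ) * Real.pi = Real.pi / 2 := by ring
    rw [hval] at this
    simp [Real.sin_pi, Real.sin_pi_div_two] at this
    have hpi : Real.pi < 3.15 := Real.pi_lt_d2
    have hpi0 : 0 < Real.pi := Real.pi_pos
    nlinarith
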